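/- Suppose ω₁ ≤ κ < 𝔱 and λ ≤ 2^ω. Then there exists F : λ^{<κ} → [ω]^ω such that t₁ ⊑ t₂ implies F(t₂) ⊆* F(t₁), and incomparable t₁, t₂ have F(t₁) ∩ F(t₂) finite, where λ^{<κ} denotes sequences of elements of λ of length < κ. -/

import Mathlib

open Cardinal

/-- The tower number `𝔱`. -/
noncomputable def towerNumber : Cardinal :=
  sInf { c : Cardinal |
    ∃ S : c.ord.ToType → Set ℕ,
      (∀ i, (S i).Infinite) ∧
      (∀ i j, i < j → ((S j) \ (S i)).Finite) ∧
      ¬ ∃ T : Set ℕ, T.Infinite ∧ ∀ i, (T \ S i).Finite }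

/-! ### Auxiliary lemmas -/

/-- Almost-inclusion is transitive. -/
lemma almostSub_trans {A B C : Set ℕ} (h1 : (A \ B).Finite) (h2 : (B \ C).Finite) :
    (A \ C).Finite := by
  refine (h1.union h2).subset ?_
  intro x hx
  by_cases hB : x ∈ B
  · exact Or.inr ⟨hB, hx.2⟩
  · exact Or.inl ⟨hx.1, hB⟩

/-- Coding of boolean prefixes. -/
noncomputable def prefCode (f : ℕ → Bool) (n : ℕ) : ℕ :=
  Encodable.encode (List.ofFn fun i : Fin n => f i)

lemma prefCode_eq {f g : ℕ → Bool} {n m : ℕ} (h : prefCode f n = prefCode g m) :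
    n = m ∧ ∀ i : Fin n, f i = g i := by
  have hl : (List.ofFn fun i : Fin n => f i) = List.ofFn fun i : Fin m => g i :=
    Encodable.encode_injective h
  have hn : n = m := by
    have := congrArg List.length hl
    simpa using this
  subst hn
  refine ⟨rfl, ?_⟩
  have := List.ofFn_injective hl
  intro i
  exact congrFun this i

lemma prefCode_injective (f : ℕ → Bool) : Function.Injective (prefCode f) :=
  fun _ _ h => (prefCode_eq h).1

/-- An almost disjoint family of infinite subsets of `ℕ` indexed by `ℕ → Bool`. -/
lemma adFamily : ∃ P : (ℕ → Bool) → Set ℕ,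
    (∀ f, (P f).Infinite) ∧ ∀ f g, f ≠ g → (P f ∩ P g).Finite := by
  refine ⟨fun f => Set.range (prefCode f), fun f =>
    Set.infinite_range_of_injective (prefCode_injective f), ?_⟩
  intro f g hfg
  have hne : ∃ n, f n ≠ g n := Function.ne_iff.mp hfg
  classical
  set n₀ := Nat.find hne with hn₀
  have hsub : Set.range (prefCode f) ∩ Set.range (prefCode g) ⊆
      prefCode f '' Set.Iic n₀ := by
    rintro x ⟨⟨n, rfl⟩, ⟨m, hm⟩⟩
    obtain ⟨hnm, hag⟩ := prefCode_eq hm.symm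
    refine ⟨n, ?_, rfl⟩
    simp only [Set.mem_Iic]
    by_contra hlt
    push_neg at hlt
    exact (Nat.find_spec hne) (hag ⟨n₀, hlt⟩)
  exact ((Set.finite_Iic n₀).image _).subset hsub

/-- Any infinite subset of `ℕ` splits into `Λ`-many almost disjoint infinite pieces. -/
lemma exists_split {Λ : Type} (ι : Λ ↪ (ℕ → Bool)) (A : Set ℕ) (hA : A.Infinite) :
    ∃ Q : Λ → Set ℕ, ∀ l, (Q l).Infinite ∧ Q l ⊆ A ∧
      ∀ l', l ≠ l' → (Q l ∩ Q l').Finite := by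
  obtain ⟨P, hPinf, hPad⟩ := adFamily
  let e := Set.Infinite.natEmbedding A hA
  let j : ℕ → ℕ := fun n => (e n : ℕ)
  have hj : Function.Injective j := by
    intro a b h
    exact e.injective (Subtype.ext h)
  refine ⟨fun l => j '' P (ι l), fun l => ⟨?_, ?_, ?_⟩⟩
  · exact (hPinf (ι l)).image hj.injOn
  · rintro x ⟨n, _, rfl⟩
    exact (e n).2
  · intro l' hne
    rw [← Set.image_inter hj]
    exact (hPad _ _ fun h => hne (ι.injective h)).image _

open Classical in
/-- A splitting function, defined by choice. -/
noncomputable def splitFun {Λ : Type} (ι : Λ ↪ (ℕ → Bool)) : Set ℕ → Λ → Set ℕ :=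
  fun A => if h : A.Infinite then (exists_split ι A h).choose else fun _ => ∅

lemma splitFun_spec {Λ : Type} (ι : Λ ↪ (ℕ → Bool)) {A : Set ℕ} (hA : A.Infinite) (l : Λ) :
    (splitFun ι A l).Infinite ∧ splitFun ι A l ⊆ A ∧
      ∀ l', l ≠ l' → (splitFun ι A l ∩ splitFun ι A l').Finite := by
  have h2 := (exists_split ι A hA).choose_spec
  classical
  rw [splitFun]
  rw [dif_pos hA]
  exact ⟨(h2 l).1, (h2 l).2.1, fun l' h => (h2 l).2.2 l' h⟩

/-! ### Tower number facts -/

lemma towerNumber_le {c : Cardinal} (S : c.ord.ToType → Set ℕ)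
    (h1 : ∀ i, (S i).Infinite) (h2 : ∀ i j, i < j → ((S j) \ (S i)).Finite)
    (h3 : ¬ ∃ T : Set ℕ, T.Infinite ∧ ∀ i, (T \ S i).Finite) : towerNumber ≤ c :=
  csInf_le' ⟨S, h1, h2, h3⟩

lemma pseudo_of_lt_tower {c : Cardinal} (hc : c < towerNumber) (S : c.ord.ToType → Set ℕ)
    (h1 : ∀ i, (S i).Infinite) (h2 : ∀ i j, i < j → ((S j) \ (S i)).Finite) :
    ∃ T : Set ℕ, T.Infinite ∧ ∀ i, (T \ S i).Finite := by
  by_contra h3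
  exact absurd (towerNumber_le S h1 h2 h3) (not_le.2 hc)

/-- Every `⊆*`-decreasing chain of infinite sets of length `< 𝔱` has a pseudo-intersection. -/
lemma chain_pseudo {o : Ordinal} (ho : o.card < towerNumber) (S : Ordinal → Set ℕ)
    (h1 : ∀ β < o, (S β).Infinite)
    (h2 : ∀ β β', β ≤ β' → β' < o → (S β' \ S β).Finite) :
    ∃ T : Set ℕ, T.Infinite ∧ ∀ β < o, (T \ S β).Finite := by
  rcases Ordinal.zero_or_succ_or_isSuccLimit o with h0 | ⟨a, rfl⟩ | hlim
  · subst h0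
    exact ⟨Set.univ, Set.infinite_univ, fun β hβ => absurd hβ (not_lt_zero (a := β))⟩
  · refine ⟨S a, h1 a (Order.lt_succ a), fun β hβ => ?_⟩
    exact h2 β a (Order.lt_succ_iff.1 hβ) (Order.lt_succ a)
  · obtain ⟨f, hf⟩ := Ordinal.exists_fundamental_sequence o
    have hcof : o.cof < towerNumber := lt_of_le_of_lt (Ordinal.cof_le_card o) ho
    set e := Ordinal.ToType.mk (o := o.cof.ord) with he
    set S' : o.cof.ord.ToType → Set ℕ :=
      fun i => S (f (e.symm i).1 (e.symm i).2) with hS'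
    have hflt : ∀ (b : Ordinal) (hb : b < o.cof.ord), f b hb < o := by
      intro b hb
      conv_rhs => rw [← hf.blsub_eq]
      exact Ordinal.lt_blsub _ _ _
    have h1' : ∀ i, (S' i).Infinite := fun i => h1 _ (hflt _ _)
    have h2' : ∀ i j, i < j → (S' j \ S' i).Finite := by
      intro i j hij
      have hlt : (e.symm i : Ordinal) < (e.symm j : Ordinal) := e.symm.lt_iff_lt.2 hij
      exact h2 _ _ (le_of_lt (hf.strict_mono _ _ hlt)) (hflt _ _)
    obtain ⟨T, hT, hTm⟩ := pseudo_of_lt_tower hcof S' h1' h2'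
    refine ⟨T, hT, fun β hβ => ?_⟩
    have hβb : β < Ordinal.blsub _ f := by rw [hf.blsub_eq]; exact hβ
    obtain ⟨i, hi, hle⟩ := Ordinal.lt_blsub_iff.1 hβb
    have key := hTm (e ⟨i, hi⟩)
    have hSe : S' (e ⟨i, hi⟩) = S (f i hi) := by
      rw [hS']
      simp
    rw [hSe] at key
    exact almostSub_trans key (h2 β (f i hi) hle (hflt _ _))

/-! ### The recursive construction -/

open Classical in
/-- Choice of a pseudo-intersection of a chain, if one exists. -/
noncomputable def psi (α : Ordinal) (chain : ∀ β < α, Set ℕ) : Set ℕ :=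
  if h : ∃ T : Set ℕ, T.Infinite ∧ ∀ β (hb : β < α), (T \ chain β hb).Finite
  then h.choose else ∅

lemma psi_spec {α : Ordinal} {chain : ∀ β < α, Set ℕ}
    (h : ∃ T : Set ℕ, T.Infinite ∧ ∀ β (hb : β < α), (T \ chain β hb).Finite) :
    (psi α chain).Infinite ∧ ∀ β (hb : β < α), (psi α chain \ chain β hb).Finite := by
  classical
  rw [psi, dif_pos h]
  exact ⟨h.choose_spec.1, h.choose_spec.2⟩

/-- The tree of sets, built by transfinite recursion. -/
noncomputable def buildF {Λ : Type} (split : Set ℕ → Λ → Set ℕ) :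
    Ordinal → (Ordinal → Λ) → Set ℕ :=
  fun α => Ordinal.limitRecOn α (fun _ => Set.univ)
    (fun β ih t => split (ih t) (t β))
    (fun α _ ih t => psi α (fun β h => ih β h t))

lemma buildF_zero {Λ : Type} (split : Set ℕ → Λ → Set ℕ) :
    buildF split 0 = fun _ => Set.univ :=
  Ordinal.limitRecOn_zero _ _ _

lemma buildF_succ {Λ : Type} (split : Set ℕ → Λ → Set ℕ) (a : Ordinal) :
    buildF split (Order.succ a) = fun t => split (buildF split a t) (t a) :=
  Ordinal.limitRecOn_succ _ _ _ _

lemma buildF_limit {Λ : Type} (split : Set ℕ → Λ → Set ℕ) {α : Ordinal}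
    (h : Order.IsSuccLimit α) :
    buildF split α = fun t => psi α (fun β _ => buildF split β t) :=
  Ordinal.limitRecOn_limit _ _ _ _ h

lemma buildF_zero' {Λ : Type} (split : Set ℕ → Λ → Set ℕ) (t : Ordinal → Λ) :
    buildF split 0 t = Set.univ := by rw [buildF_zero]

lemma buildF_succ' {Λ : Type} (split : Set ℕ → Λ → Set ℕ) (a : Ordinal) (t : Ordinal → Λ) :
    buildF split (Order.succ a) t = split (buildF split a t) (t a) := by rw [buildF_succ]

lemma buildF_limit' {Λ : Type} (split : Set ℕ → Λ → Set ℕ) {α : Ordinal}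
    (h : Order.IsSuccLimit α) (t : Ordinal → Λ) :
    buildF split α t = psi α (fun β _ => buildF split β t) := by rw [buildF_limit split h]

/-- `buildF split α t` only depends on `t` below `α`. -/
lemma buildF_congr {Λ : Type} (split : Set ℕ → Λ → Set ℕ) :
    ∀ α : Ordinal, ∀ t t' : Ordinal → Λ, (∀ β < α, t β = t' β) →
      buildF split α t = buildF split α t' := by
  intro α
  induction α using Ordinal.induction with
  | _ α ih =>
    intro t t' h
    rcases Ordinal.zero_or_succ_or_isSuccLimit α with h0 | ⟨a, rfl⟩ | hlim
    · subst h0; rw [buildF_zero', buildF_zero']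
    · rw [buildF_succ', buildF_succ',
        ih a (Order.lt_succ a) t t' (fun β hβ => h β (hβ.trans (Order.lt_succ a))),
        h a (Order.lt_succ a)]
    · rw [buildF_limit' split hlim, buildF_limit' split hlim]
      have hch : (fun β (_ : β < α) => buildF split β t)
          = fun β (_ : β < α) => buildF split β t' := by
        funext β hβ
        exact ih β hβ t t' (fun γ hγ => h γ (hγ.trans hβ))
      rw [hch]

/-- The main invariant: below `κ.ord` all sets are infinite and the chain is
`⊆*`-decreasing. -/
lemma buildF_invariant {Λ : Type} (split : Set ℕ → Λ → Set ℕ)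
    (hsplit : ∀ A : Set ℕ, A.Infinite → ∀ l : Λ,
      (split A l).Infinite ∧ split A l ⊆ A)
    (κ : Cardinal) (hκ : κ < towerNumber) :
    ∀ α : Ordinal, α < κ.ord → ∀ t : Ordinal → Λ,
      (buildF split α t).Infinite ∧
      ∀ β, β ≤ α → (buildF split α t \ buildF split β t).Finite := by
  intro α
  induction α using Ordinal.induction with
  | _ α ih =>
    intro hα t
    rcases Ordinal.zero_or_succ_or_isSuccLimit α with h0 | ⟨a, rfl⟩ | hlim
    · subst h0
      rw [buildF_zero']
      refine ⟨Set.infinite_univ, fun β hβ => ?_⟩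
      rw [nonpos_iff_eq_zero] at hβ
      subst hβ
      rw [buildF_zero']
      simp
    · have ha : a < κ.ord := (Order.lt_succ a).trans hα
      have ihA := ih a (Order.lt_succ a) ha t
      rw [buildF_succ']
      have hs := hsplit _ ihA.1 (t a)
      refine ⟨hs.1, fun β hβ => ?_⟩
      have hsub : (split (buildF split a t) (t a) \ buildF split a t).Finite := by
        rw [Set.diff_eq_empty.2 hs.2]
        exact Set.finite_empty
      rcases eq_or_lt_of_le hβ with heq | hlt
      · subst heq
        rw [buildF_succ']
        simp
      · exact almostSub_trans hsub (ihA.2 β (Order.lt_succ_iff.1 hlt))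
    · have hcard : α.card < towerNumber := (Cardinal.lt_ord.1 hα).trans hκ
      have hex : ∃ T : Set ℕ, T.Infinite ∧
          ∀ β (hb : β < α), (T \ buildF split β t).Finite := by
        obtain ⟨T, hT1, hT2⟩ := chain_pseudo hcard (fun β => buildF split β t)
          (fun β hβ => (ih β hβ (hβ.trans hα) t).1)
          (fun β β' hle hlt => (ih β' hlt (hlt.trans hα) t).2 β hle)
        exact ⟨T, hT1, hT2⟩
      rw [buildF_limit' split hlim]
      have hps := psi_spec hex
      refine ⟨hps.1, fun β hβ => ?_⟩
      rcases eq_or_lt_of_le hβ with heq | hlt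
      · subst heq
        rw [buildF_limit' split hlim]
        simp
      · exact hps.2 β hlt

theorem stmt9 (κ : Cardinal) (h1 : Cardinal.aleph 1 ≤ κ) (h2 : κ < towerNumber)
    (Λ : Type) (hΛ : #Λ ≤ 2 ^ Cardinal.aleph0) :
    ∃ F : Ordinal → (Ordinal → Λ) → Set ℕ,
      (∀ α < κ.ord, ∀ t, (F α t).Infinite) ∧
      (∀ α, ∀ t t' : Ordinal → Λ, (∀ β < α, t β = t' β) → F α t = F α t') ∧
      (∀ α α' : Ordinal, α ≤ α' → α' < κ.ord → ∀ t, ((F α' t) \ (F α t)).Finite) ∧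
      (∀ α α' : Ordinal, α < κ.ord → α' < κ.ord → ∀ t t' : Ordinal → Λ,
        (∃ β, β < α ∧ β < α' ∧ t β ≠ t' β) → ((F α t) ∩ (F α' t')).Finite) := by
  -- get an embedding of `Λ` into `ℕ → Bool`
  have hmk : #Λ ≤ #(ℕ → Bool) := by
    rwa [← Cardinal.power_def, Cardinal.mk_bool, Cardinal.mk_nat]
  obtain ⟨ι⟩ := (Cardinal.le_def Λ (ℕ → Bool)).1 hmk
  set split := splitFun ι with hsplitdef
  have hsplit : ∀ A : Set ℕ, A.Infinite → ∀ l : Λ,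
      (split A l).Infinite ∧ split A l ⊆ A :=
    fun A hA l => ⟨(splitFun_spec ι hA l).1, (splitFun_spec ι hA l).2.1⟩
  have inv := buildF_invariant split hsplit κ h2
  refine ⟨buildF split, fun α hα t => (inv α hα t).1, buildF_congr split,
    fun α α' hle hlt t => (inv α' hlt t).2 α hle, ?_⟩
  rintro α α' hα hα' t t' ⟨β, hβα, hβα', hne⟩
  classical
  -- least point of difference
  set D : Set Ordinal := {γ | t γ ≠ t' γ} with hD
  have hDne : D.Nonempty := ⟨β, hne⟩
  set β₀ := sInf D with hβ₀
  have hβ₀mem : β₀ ∈ D := csInf_mem hDne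
  have hβ₀le : β₀ ≤ β := csInf_le' (show β ∈ D from hne)
  have hagree : ∀ γ < β₀, t γ = t' γ := by
    intro γ hγ
    by_contra h
    exact absurd (csInf_le' (show γ ∈ D from h)) (not_le.2 hγ)
  have hβ₀α : β₀ < α := lt_of_le_of_lt hβ₀le hβα
  have hβ₀α' : β₀ < α' := lt_of_le_of_lt hβ₀le hβα'
  have hβ₀κ : β₀ < κ.ord := hβ₀α.trans hα
  have hsame : buildF split β₀ t = buildF split β₀ t' := buildF_congr split β₀ t t' hagree
  have hinf : (buildF split β₀ t).Infinite := (inv β₀ hβ₀κ t).1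
  -- the two successor sets are almost disjoint
  have had : (buildF split (Order.succ β₀) t ∩ buildF split (Order.succ β₀) t').Finite := by
    rw [buildF_succ', buildF_succ', ← hsame]
    exact (splitFun_spec ι hinf (t β₀)).2.2 (t' β₀) hβ₀mem
  have hd1 : (buildF split α t \ buildF split (Order.succ β₀) t).Finite :=
    (inv α hα t).2 (Order.succ β₀) (Order.succ_le_of_lt hβ₀α)
  have hd2 : (buildF split α' t' \ buildF split (Order.succ β₀) t').Finite :=
    (inv α' hα' t').2 (Order.succ β₀) (Order.succ_le_of_lt hβ₀α')
  refine ((hd1.union hd2).union had).subset ?_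
  rintro x ⟨hx1, hx2⟩
  by_cases ha : x ∈ buildF split (Order.succ β₀) t
  · by_cases hb : x ∈ buildF split (Order.succ β₀) t'
    · exact Or.inr ⟨ha, hb⟩
    · exact Or.inl (Or.inr ⟨hx2, hb⟩)
  · exact Or.inl (Or.inl ⟨hx1, ha⟩)
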